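/- arXiv:1812.11407 — 2 statements merged into one kernel-verified Lean document; each statement's English description precedes it below -/
import Mathlib

section
/- For β > β_c: for every ε > 0 and every k ∈ ℕ there exists N ∈ ℕ with N ≥ k such that for all n > N, the Gibbs measure of the k-th stage Cantor set satisfies μ_{β,n}(C_k) > 1 − ε. More precisely, μ_{β,n}(C_k) > 1 − J_β e^{−(βα−h)(n−k)} for all n > k, where J_β = sup_{n∈ℕ} K_1 / (K_1(1 − e^{−bn}) + 2e^{−(h+b)n}), with b = βα − h and K_1 = 1/(1 − e^{−b}). -/
open MeasureTheory Set Real Filter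

noncomputable def cantorStage : ℕ → Set ℝ
  | 0 => Set.Icc 0 1
  | (m+1) => (fun x => x / 3) '' cantorStage m ∪ (fun x => (x + 2) / 3) '' cantorStage m

lemma cs_compact (m : ℕ) : IsCompact (cantorStage m) := by
  induction m with
  | zero => exact isCompact_Icc
  | succ m ih =>
    exact (ih.image (by continuity)).union (ih.image (by continuity))

lemma cs_meas (m : ℕ) : MeasurableSet (cantorStage m) := (cs_compact m).isClosed.measurableSet

lemma cs_subset (m : ℕ) : cantorStage m ⊆ Set.Icc 0 1 := by
  induction m with
  | zero => exact subset_rfl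
  | succ m ih =>
    rintro y (⟨x, hx, rfl⟩ | ⟨x, hx, rfl⟩) <;> obtain ⟨h0, h1⟩ := ih hx <;>
      constructor <;> [linarith; linarith; linarith; linarith]

lemma cs_anti : Antitone cantorStage := by
  apply antitone_nat_of_succ_le
  intro m
  induction m with
  | zero =>
    rintro y (⟨x, hx, rfl⟩ | ⟨x, hx, rfl⟩) <;> obtain ⟨h0, h1⟩ := (cs_subset 0) hx <;>
      constructor <;> [linarith; linarith; linarith; linarith]
  | succ m ih =>
    rintro y (⟨x, hx, rfl⟩ | ⟨x, hx, rfl⟩)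
    · exact Or.inl ⟨x, ih hx, rfl⟩
    · exact Or.inr ⟨x, ih hx, rfl⟩

lemma img1 (S : Set ℝ) : (fun x => x / 3) '' S = (fun y => 3 * y) ⁻¹' S := by
  ext y; constructor
  · rintro ⟨x, hx, rfl⟩; simpa [mul_div_cancel₀] using hx
  · intro h; exact ⟨3 * y, h, by ring⟩

lemma img2 (S : Set ℝ) : (fun x => (x + 2) / 3) '' S = (fun y => 3 * y + -2) ⁻¹' S := by
  ext y; constructor
  · rintro ⟨x, hx, rfl⟩
    have h3 : (3:ℝ) * ((x + 2) / 3) + -2 = x := by ring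
    show (3:ℝ) * ((x + 2) / 3) + -2 ∈ S
    rw [h3]; exact hx
  · intro h; exact ⟨3 * y + -2, h, by ring⟩

lemma cs_vol (m : ℕ) : volume (cantorStage m) = ENNReal.ofReal ((2/3)^m) := by
  induction m with
  | zero => simp [cantorStage, Real.volume_Icc]
  | succ m ih =>
    have hdisj : Disjoint ((fun x => x / 3) '' cantorStage m)
        ((fun x => (x + 2) / 3) '' cantorStage m) := by
      rw [Set.disjoint_left]
      rintro y ⟨x, hx, rfl⟩ ⟨x', hx', hy⟩
      obtain ⟨h0, h1⟩ := cs_subset m hx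
      obtain ⟨h0', h1'⟩ := cs_subset m hx'
      have : x = x' + 2 := by field_simp at hy; linarith
      linarith
    have hm1 : MeasurableSet ((fun x => (x + 2) / 3) '' cantorStage m) := by
      rw [img2]; exact (cs_meas m).preimage ((measurable_const_mul 3).add_const (-2))
    have e1 : volume ((fun x => x / 3) '' cantorStage m)
        = ENNReal.ofReal ((2/3)^m / 3) := by
      rw [img1, show (fun y : ℝ => 3 * y) = (3 * ·) by rfl, Real.volume_preimage_mul_left (by norm_num), ih,
        ← ENNReal.ofReal_mul (abs_nonneg _)]
      congr 1
      rw [abs_of_nonneg (by norm_num : (0:ℝ) ≤ 3⁻¹)]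
      ring
    have e2 : volume ((fun x => (x + 2) / 3) '' cantorStage m)
        = ENNReal.ofReal ((2/3)^m / 3) := by
      rw [img2, show (fun y : ℝ => 3 * y + -2) = ((· + (-2)) ∘ (3 * ·)) by rfl,
        Set.preimage_comp, Real.volume_preimage_mul_left (by norm_num),
        measure_preimage_add_right volume (-2) _, ih,
        ← ENNReal.ofReal_mul (abs_nonneg _)]
      congr 1
      rw [abs_of_nonneg (by norm_num : (0:ℝ) ≤ 3⁻¹)]
      ring
    rw [show cantorStage (m+1) = (fun x => x / 3) '' cantorStage m ∪ (fun x => (x + 2) / 3) '' cantorStage m from rfl,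
      measure_union hdisj hm1, e1, e2,
      ← ENNReal.ofReal_add (by positivity) (by positivity)]
    congr 1
    ring
noncomputable def Bset (m : ℕ) : Set ℝ := cantorStage (m - 1) \ cantorStage m

noncomputable def psi (A : ℕ → ℝ) (n : ℕ) (x : ℝ) : ℝ :=
  -∑ k ∈ Finset.Icc 1 n, A k * (Bset k).indicator (fun _ => (1:ℝ)) x

noncomputable def hc : ℝ := Real.log (3/2)

noncomputable def psiα (α : ℝ) : ℕ → ℝ → ℝ := psi (fun k => α * k)

noncomputable def Zf (α β : ℝ) (n : ℕ) : ℝ :=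
  ∫ x in Set.Icc (0:ℝ) 1, Real.exp (-β * psiα α n x)

noncomputable def gibbs (α β : ℝ) (n : ℕ) (A : Set ℝ) : ℝ :=
  (∫ x in A ∩ Set.Icc (0:ℝ) 1, Real.exp (-β * psiα α n x)) / Zf α β n

lemma Bset_meas (m : ℕ) : MeasurableSet (Bset m) := (cs_meas _).diff (cs_meas _)

lemma Bset_subset (m : ℕ) : Bset m ⊆ cantorStage (m-1) := Set.diff_subset

lemma Bset_vol (m : ℕ) (hm : 1 ≤ m) : volume (Bset m) = ENNReal.ofReal ((2/3)^m / 2) := by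
  obtain ⟨j, rfl⟩ := Nat.exists_eq_add_of_le hm
  have hsub : cantorStage (1+j) ⊆ cantorStage (1+j-1) := cs_anti (by omega)
  rw [Bset, measure_diff hsub (cs_meas _).nullMeasurableSet
    (by rw [cs_vol]; exact ENNReal.ofReal_ne_top), cs_vol, cs_vol,
    ← ENNReal.ofReal_sub _ (by positivity)]
  congr 1
  have : 1 + j - 1 = j := by omega
  rw [this]
  rw [show 1 + j = j + 1 from by omega]
  ring

lemma exp_eq (α β : ℝ) (n : ℕ) (x : ℝ) (hx : x ∈ Set.Icc (0:ℝ) 1) :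
    Real.exp (-β * psiα α n x) =
      (∑ m ∈ Finset.Icc 1 n, Real.exp (β*α*m) * (Bset m).indicator (fun _ => (1:ℝ)) x)
        + (cantorStage n).indicator (fun _ => (1:ℝ)) x := by
  classical
  by_cases hmem : x ∈ cantorStage n
  · have hz : ∀ k ∈ Finset.Icc 1 n, (Bset k).indicator (fun _ => (1:ℝ)) x = 0 := by
      intro k hk
      rw [Finset.mem_Icc] at hk
      apply Set.indicator_of_notMem
      intro hB
      exact hB.2 (cs_anti hk.2 hmem)
    have h1 : psiα α n x = 0 := by
      simp only [psiα, psi, neg_eq_zero]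
      exact Finset.sum_eq_zero fun k hk => by rw [hz k hk, mul_zero]
    rw [h1, mul_zero, Real.exp_zero, Set.indicator_of_mem hmem,
      Finset.sum_congr rfl fun k hk => by rw [hz k hk, mul_zero]]
    simp
  · have hex : ∃ m, x ∉ cantorStage m := ⟨n, hmem⟩
    set m := Nat.find hex with hm
    have hm1 : 1 ≤ m := by
      rw [hm, Nat.succ_le_iff, Nat.find_pos]
      simpa [cantorStage] using hx
    have hmn : m ≤ n := Nat.find_min' hex hmem
    have hxCm1 : x ∈ cantorStage (m - 1) := by
      have := Nat.find_min hex (show m - 1 < m by omega)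
      exact not_not.mp this
    have hxB : x ∈ Bset m := ⟨hxCm1, Nat.find_spec hex⟩
    have hnotB : ∀ k, k ≠ m → x ∉ Bset k := by
      intro k hk hB
      rcases lt_or_gt_of_ne hk with h | h
      · exact hB.2 (not_not.mp (Nat.find_min hex h))
      · exact (Nat.find_spec hex) (cs_anti (show m ≤ k - 1 by omega) hB.1)
    have hsum : ∀ (c : ℕ → ℝ), ∑ k ∈ Finset.Icc 1 n, c k * (Bset k).indicator (fun _ => (1:ℝ)) x = c m := by
      intro c
      rw [Finset.sum_eq_single_of_mem m (Finset.mem_Icc.mpr ⟨hm1, hmn⟩)]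
      · rw [Set.indicator_of_mem hxB, mul_one]
      · intro k _ hk
        rw [Set.indicator_of_notMem (hnotB k hk), mul_zero]
    have h1 : psiα α n x = -(α * m) := by
      simp only [psiα, psi, neg_inj]
      exact hsum _
    rw [h1, Set.indicator_of_notMem hmem, hsum (fun k => Real.exp (β*α*k))]
    rw [add_zero]
    congr 1
    ring
lemma int_formula (α β : ℝ) (n : ℕ) (S : Set ℝ) (hS : MeasurableSet S)
    (hSsub : S ⊆ Set.Icc 0 1) :
    ∫ x in S, Real.exp (-β * psiα α n x) =
      (∑ m ∈ Finset.Icc 1 n, Real.exp (β*α*m) * (volume (S ∩ Bset m)).toReal)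
        + (volume (S ∩ cantorStage n)).toReal := by
  have hfin : volume S < ⊤ :=
    lt_of_le_of_lt (measure_mono hSsub) (by rw [Real.volume_Icc]; exact ENNReal.ofReal_lt_top)
  have hint : ∀ (T : Set ℝ), MeasurableSet T →
      IntegrableOn (fun x => T.indicator (fun _ => (1:ℝ)) x) S volume := by
    intro T hT
    apply Integrable.indicator _ hT
    exact integrableOn_const hfin.ne
  have hci : ∀ (c : ℝ) (T : Set ℝ), MeasurableSet T →
      ∫ x in S, c * T.indicator (fun _ => (1:ℝ)) x = c * (volume (S ∩ T)).toReal := by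
    intro c T hT
    rw [MeasureTheory.integral_const_mul, setIntegral_indicator hT, setIntegral_const, smul_eq_mul, mul_one, measureReal_def]
  rw [setIntegral_congr_fun hS (fun x hx => exp_eq α β n x (hSsub hx))]
  rw [MeasureTheory.integral_add]
  · congr 1
    · rw [MeasureTheory.integral_finset_sum]
      · exact Finset.sum_congr rfl fun m _ => hci _ _ (Bset_meas m)
      · exact fun m _ => ((hint _ (Bset_meas m)).const_mul _)
    · rw [setIntegral_indicator (cs_meas n), setIntegral_const, smul_eq_mul, mul_one, measureReal_def]
  · exact integrable_finset_sum _ (fun m _ => ((hint _ (Bset_meas m)).const_mul _))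
  · exact hint _ (cs_meas n)
lemma num_eq (α β : ℝ) (hb : hc < β*α) (k n : ℕ) (hk : k ≤ n) :
    ∫ x in cantorStage k ∩ Set.Icc 0 1, Real.exp (-β * psiα α n x)
      = ((Real.exp (β*α-hc))^(n+1) - (Real.exp (β*α-hc))^(k+1))/(2*(Real.exp (β*α-hc) - 1))
        + (2/3)^n := by
  have hCk : cantorStage k ∩ Set.Icc 0 1 = cantorStage k := Set.inter_eq_left.mpr (cs_subset k)
  rw [hCk, int_formula α β n _ (cs_meas k) (cs_subset k)]
  have hCn : cantorStage k ∩ cantorStage n = cantorStage n := Set.inter_eq_right.mpr (cs_anti hk)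
  have ht1 : (1:ℝ) < Real.exp (β*α-hc) := by
    rw [show (1:ℝ) = Real.exp 0 from Real.exp_zero.symm]
    exact Real.exp_lt_exp.mpr (by linarith)
  have e23 : Real.exp (-hc) = 2/3 := by
    rw [hc, Real.exp_neg, Real.exp_log (by norm_num)]
    norm_num
  -- split the sum
  have hsplit : ∑ m ∈ Finset.Icc 1 n, Real.exp (β*α*m) * (volume (cantorStage k ∩ Bset m)).toReal
      = ∑ m ∈ Finset.Ioc 0 k, Real.exp (β*α*m) * (volume (cantorStage k ∩ Bset m)).toReal
        + ∑ m ∈ Finset.Ioc k n, Real.exp (β*α*m) * (volume (cantorStage k ∩ Bset m)).toReal := by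
    rw [show Finset.Icc 1 n = Finset.Ioc 0 n from (Finset.Icc_add_one_left_eq_Ioc 0 n)]
    exact (Finset.sum_Ioc_consecutive _ (Nat.zero_le k) hk).symm
  have hzero : ∑ m ∈ Finset.Ioc 0 k, Real.exp (β*α*m) * (volume (cantorStage k ∩ Bset m)).toReal = 0 := by
    apply Finset.sum_eq_zero
    intro m hm
    rw [Finset.mem_Ioc] at hm
    have : cantorStage k ∩ Bset m = ∅ := by
      ext x
      simp only [Set.mem_inter_iff, Set.mem_empty_iff_false, iff_false, not_and]
      intro hxk hxB
      exact hxB.2 (cs_anti hm.2 hxk)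
    rw [this, measure_empty, ENNReal.toReal_zero, mul_zero]
  have hfull : ∀ m ∈ Finset.Ioc k n,
      Real.exp (β*α*m) * (volume (cantorStage k ∩ Bset m)).toReal
        = (Real.exp (β*α-hc))^m / 2 := by
    intro m hm
    rw [Finset.mem_Ioc] at hm
    have hBm : cantorStage k ∩ Bset m = Bset m := by
      apply Set.inter_eq_right.mpr
      exact fun x hx => cs_anti (show k ≤ m - 1 by omega) (hx.1)
    rw [hBm, Bset_vol m (by omega), ENNReal.toReal_ofReal (by positivity)]
    rw [show ((2:ℝ)/3)^m = (Real.exp (-hc))^m from by rw [e23],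
      ← Real.exp_nat_mul, ← Real.exp_nat_mul,
      show (m:ℝ)*(β*α-hc) = β*α*(m:ℝ) + (m:ℝ)*(-hc) from by ring, Real.exp_add]
    ring
  rw [hsplit, hzero, zero_add, Finset.sum_congr rfl hfull, hCn, cs_vol,
    ENNReal.toReal_ofReal (by positivity)]
  congr 1
  rw [show Finset.Ioc k n = Finset.Ico (k+1) (n+1) from by
      rw [← Finset.Icc_add_one_left_eq_Ioc, Finset.Ico_add_one_right_eq_Icc]]
  rw [← Finset.sum_div, geom_sum_Ico (ne_of_gt ht1) (by omega)]
  rw [div_div]; ring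
lemma alg {t c K1 D J : ℝ} (ht : 1 < t) (hcpos : 0 < c) (k n : ℕ)
    (hK1 : K1 = t/(t-1))
    (hD : D = K1*(1 - (t^n)⁻¹) + 2*c*(t^n)⁻¹)
    (hJD : K1 / D ≤ J) :
    ((t^(n+1) - t^(k+1))/(2*(t-1)) + c) / ((t^(n+1) - t)/(2*(t-1)) + c)
      > 1 - J * (t^k / t^n) := by
  have ht0 : (0:ℝ) < t := lt_trans one_pos ht
  have ht1' : (0:ℝ) < t - 1 := by linarith
  have htn : (0:ℝ) < t^n := pow_pos ht0 n
  have htk : (0:ℝ) < t^k := pow_pos ht0 k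
  have hZ2 : (t^(n+1) - t)/(2*(t-1)) + c = t^n * D / 2 := by
    rw [hD, hK1]
    field_simp
    ring
  have hZpos : 0 < (t^(n+1) - t)/(2*(t-1)) + c := by
    have h1 : t ≤ t^(n+1) := by
      calc t = t^1 := (pow_one t).symm
      _ ≤ t^(n+1) := pow_le_pow_right₀ ht.le (by omega)
    have h2 : 0 ≤ (t^(n+1) - t)/(2*(t-1)) := div_nonneg (by linarith) (by linarith)
    linarith
  have hDpos : 0 < D := by nlinarith [hZpos, htn, hZ2]
  have hK1pos : 0 < K1 := by rw [hK1]; positivity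
  have h1ne : t - 1 ≠ 0 := ht1'.ne'
  have hDne : D ≠ 0 := by nlinarith [hZpos, htn, hZ2]
  have htnne : t^n ≠ 0 := htn.ne'
  have heq : 1 - ((t^(n+1) - t^(k+1))/(2*(t-1)) + c) / ((t^(n+1) - t)/(2*(t-1)) + c)
      = K1*(t^k-1)/(t^n*D) := by
    have hs : (t^(n+1) - t^(k+1))/(2*(t-1)) + c
        = t^n*D/2 - (t^(k+1) - t)/(2*(t-1)) := by
      rw [← hZ2]; ring
    rw [hs, hZ2, hK1]
    field_simp
    ring
  have h1 : K1*(t^k-1)/(t^n*D) < K1*t^k/(t^n*D) :=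
    (div_lt_div_iff_of_pos_right (by positivity)).mpr (by nlinarith)
  have h2 : K1*t^k/(t^n*D) ≤ J*(t^k/t^n) := by
    have e : K1*t^k/(t^n*D) = (K1/D)*(t^k/t^n) := by
      field_simp
    rw [e]
    exact mul_le_mul_of_nonneg_right hJD (by positivity)
  linarith
theorem stmt9 (α β : ℝ) (hα : 0 < α) (hβc : hc / α < β) :
    let b : ℝ := β*α - hc
    let K1 : ℝ := 1 / (1 - Real.exp (-b))
    let Jβ : ℝ := ⨆ n : ℕ, K1 / (K1 * (1 - Real.exp (-b * n)) + 2 * Real.exp (-(hc + b) * n))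
    (∀ ε > 0, ∀ k : ℕ, ∃ N : ℕ, k ≤ N ∧ ∀ n > N, gibbs α β n (cantorStage k) > 1 - ε) ∧
    (∀ k n : ℕ, k < n →
      gibbs α β n (cantorStage k) > 1 - Jβ * Real.exp (-b * ((n:ℝ) - k))) := by
  intro b K1 Jβ
  have hba : hc < β * α := by
    have := (div_lt_iff₀ hα).mp hβc
    linarith [mul_comm β α]
  have hb : 0 < b := by simp only [b]; linarith
  set t := Real.exp b with htdef
  have ht : 1 < t := by
    rw [htdef, show (1:ℝ) = Real.exp 0 from Real.exp_zero.symm]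
    exact Real.exp_lt_exp.mpr hb
  have ht0 : (0:ℝ) < t := lt_trans one_pos ht
  have ht1' : (0:ℝ) < t - 1 := by linarith
  have hK1 : K1 = t / (t - 1) := by
    simp only [K1, Real.exp_neg, ← htdef]
    rw [show 1 - t⁻¹ = (t-1)/t from by field_simp, one_div_div]
  have hK1pos : 0 < K1 := by rw [hK1]; positivity
  set Dn : ℕ → ℝ := fun n => K1 * (1 - Real.exp (-b * n)) + 2 * Real.exp (-(hc + b) * n)
    with hDndef
  have e23 : Real.exp (-hc) = 2/3 := by
    rw [hc, Real.exp_neg, Real.exp_log (by norm_num)]; norm_num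
  have hexpb : ∀ n : ℕ, Real.exp (-b * n) = (t^n)⁻¹ := by
    intro n
    rw [show -b * (n:ℝ) = -((n:ℝ) * b) from by ring, Real.exp_neg, Real.exp_nat_mul, htdef]
  have hDform : ∀ n : ℕ, Dn n = K1 * (1 - (t^n)⁻¹) + 2 * ((2/3)^n) * (t^n)⁻¹ := by
    intro n
    simp only [hDndef]
    rw [hexpb n, show -(hc + b) * (n:ℝ) = (n:ℝ) * (-hc) + (-b * (n:ℝ)) from by ring,
      Real.exp_add, Real.exp_nat_mul, e23, hexpb n]
    ring
  have hDge1 : ∀ n : ℕ, 1 ≤ Dn n := by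
    intro n
    rw [hDform]
    have htn : (0:ℝ) < t^n := pow_pos ht0 n
    have h23 : (0:ℝ) < (2/3:ℝ)^n := by positivity
    rcases Nat.eq_zero_or_pos n with rfl | hn
    · norm_num
    · have h1 : t ≤ t^n := by
        calc t = t^1 := (pow_one t).symm
        _ ≤ t^n := pow_le_pow_right₀ ht.le hn
      have h2 : (t^n)⁻¹ ≤ t⁻¹ := by
        apply inv_anti₀ ht0 h1
      have h3 : K1 * (1 - t⁻¹) = 1 := by
        rw [hK1]; field_simp
      have h4 : K1 * (1 - (t^n)⁻¹) ≥ 1 := by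
        rw [← h3]
        apply mul_le_mul_of_nonneg_left _ hK1pos.le
        have : (0:ℝ) < t⁻¹ := by positivity
        linarith
      nlinarith [mul_pos h23 (inv_pos.mpr htn)]
  have hDpos : ∀ n : ℕ, 0 < Dn n := fun n => lt_of_lt_of_le one_pos (hDge1 n)
  have hbdd : BddAbove (Set.range fun n : ℕ => K1 / Dn n) := by
    refine ⟨K1, ?_⟩
    rintro _ ⟨n, rfl⟩
    exact div_le_self hK1pos.le (hDge1 n)
  have hJD : ∀ n : ℕ, K1 / Dn n ≤ Jβ := fun n => le_ciSup hbdd n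
  have hJpos : 0 < Jβ := lt_of_lt_of_le (div_pos hK1pos (hDpos 0)) (hJD 0)
  -- part 2
  have hpart2 : ∀ k n : ℕ, k < n →
      gibbs α β n (cantorStage k) > 1 - Jβ * Real.exp (-b * ((n:ℝ) - k)) := by
    intro k n hkn
    have hZf : Zf α β n = (t^(n+1) - t^(0+1))/(2*(t-1)) + (2/3)^n := by
      rw [Zf, show Set.Icc (0:ℝ) 1 = cantorStage 0 ∩ Set.Icc 0 1 from by
        simp [cantorStage]]
      exact num_eq α β hba 0 n (Nat.zero_le n)
    have hnum := num_eq α β hba k n hkn.le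
    have hgibbs : gibbs α β n (cantorStage k)
        = ((t^(n+1) - t^(k+1))/(2*(t-1)) + (2/3)^n)
          / ((t^(n+1) - t)/(2*(t-1)) + (2/3)^n) := by
      rw [gibbs, hnum, hZf, pow_one]
    have hexpk : Real.exp (-b * ((n:ℝ) - k)) = t^k / t^n := by
      rw [show -b * ((n:ℝ) - k) = (k:ℝ) * b - (n:ℝ) * b from by ring, Real.exp_sub,
        Real.exp_nat_mul, Real.exp_nat_mul, htdef]
    rw [hgibbs, hexpk]
    exact alg ht (by positivity) k n hK1 (hDform n) (hJD n)
  refine ⟨?_, hpart2⟩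
  intro ε hε k
  have h1 : Tendsto (fun x : ℝ => -b * (x - (k:ℝ))) atTop atBot := by
    apply Tendsto.const_mul_atTop_of_neg (by linarith : -b < 0)
    exact tendsto_atTop_add_const_right atTop _ tendsto_id
  have h2 : Tendsto (fun n : ℕ => Jβ * Real.exp (-b * ((n:ℝ) - k))) atTop (nhds (Jβ * 0)) := by
    apply Tendsto.const_mul
    exact Real.tendsto_exp_atBot.comp (h1.comp tendsto_natCast_atTop_atTop)
  rw [mul_zero] at h2
  have hev : ∀ᶠ n : ℕ in atTop, Jβ * Real.exp (-b * ((n:ℝ) - k)) < ε :=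
    h2.eventually_lt_const hε
  obtain ⟨N0, hN0⟩ := eventually_atTop.mp hev
  refine ⟨max N0 k, le_max_right _ _, fun n hn => ?_⟩
  have hgt := hpart2 k n (lt_of_le_of_lt (le_max_right N0 k) hn)
  have hlt := hN0 n (le_of_lt (lt_of_le_of_lt (le_max_left N0 k) hn))
  linarith
end

section
/- Let f : [0,1] → ℝ be Lipschitz continuous. Then for all n > m ≥ 2, the difference of the averages of f over B_n and B_m satisfies |(1/ℓ(B_n))∫_{B_n} f dx − (1/ℓ(B_m))∫_{B_m} f dx| ≤ 2K/3^{m−1}, where K is a Lipschitz constant of f. In particular the sequence of averages (1/ℓ(B_n))∫_{B_n} f dx is Cauchy. -/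
open MeasureTheory Set Real Filter

namespace CantorAux

lemma cantor_subset (n : ℕ) : cantorStage n ⊆ Set.Icc 0 1 := by
  induction n with
  | zero => simp [cantorStage]
  | succ n ih =>
    rintro y (⟨x, hx, rfl⟩ | ⟨x, hx, rfl⟩) <;>
      · obtain ⟨h0, h1⟩ := ih hx
        constructor <;> [skip; skip] <;> simp <;> nlinarith

lemma img0_subset {s : Set ℝ} (hs : s ⊆ Set.Icc 0 1) :
    (fun x => x / 3) '' s ⊆ Set.Icc (0:ℝ) (1/3) := by
  rintro y ⟨x, hx, rfl⟩
  obtain ⟨h0, h1⟩ := hs hx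
  constructor <;> simp <;> linarith

lemma img1_subset {s : Set ℝ} (hs : s ⊆ Set.Icc 0 1) :
    (fun x => (x + 2) / 3) '' s ⊆ Set.Icc (2/3:ℝ) 1 := by
  rintro y ⟨x, hx, rfl⟩
  obtain ⟨h0, h1⟩ := hs hx
  constructor <;> simp <;> linarith

lemma cantor_compact (n : ℕ) : IsCompact (cantorStage n) := by
  induction n with
  | zero => exact isCompact_Icc
  | succ n ih =>
    exact (ih.image (by continuity)).union (ih.image (by continuity))

lemma cantor_meas (n : ℕ) : MeasurableSet (cantorStage n) :=
  (cantor_compact n).measurableSet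

lemma cantor_anti (n : ℕ) : cantorStage (n+1) ⊆ cantorStage n := by
  induction n with
  | zero =>
    intro y hy
    rcases hy with ⟨x, hx, rfl⟩ | ⟨x, hx, rfl⟩
    · exact Set.Icc_subset_Icc (by norm_num) (by norm_num) (img0_subset (by simp [cantorStage]) ⟨x, hx, rfl⟩)
    · exact Set.Icc_subset_Icc (by norm_num) le_rfl (img1_subset (by simp [cantorStage]) ⟨x, hx, rfl⟩)
  | succ n ih =>
    exact Set.union_subset_union (Set.image_mono ih) (Set.image_mono ih)

lemma img0_eq (s : Set ℝ) : (fun x => x / 3) '' s = (fun y : ℝ => 3 * y) ⁻¹' s := by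
  ext y
  constructor
  · rintro ⟨x, hx, rfl⟩; simpa [mul_div_cancel₀] using hx
  · intro h; exact ⟨3 * y, h, by ring⟩

lemma img1_eq (s : Set ℝ) : (fun x => (x + 2) / 3) '' s = (fun y : ℝ => 3 * y - 2) ⁻¹' s := by
  ext y
  constructor
  · rintro ⟨x, hx, rfl⟩
    have : 3 * ((x + 2) / 3) - 2 = x := by ring
    simpa [this] using hx
  · intro h; exact ⟨3 * y - 2, h, by ring⟩

lemma img0_meas {s : Set ℝ} (hs : MeasurableSet s) :
    MeasurableSet ((fun x => x / 3) '' s) := by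
  rw [img0_eq]; exact hs.preimage (by fun_prop)

lemma img1_meas {s : Set ℝ} (hs : MeasurableSet s) :
    MeasurableSet ((fun x => (x + 2) / 3) '' s) := by
  rw [img1_eq]; exact hs.preimage (by fun_prop)

lemma hom0 : (fun x : ℝ => x / 3) = fun x => AffineMap.homothety (0:ℝ) (3⁻¹:ℝ) x := by
  funext x; simp [AffineMap.homothety_apply]; ring

lemma hom1 : (fun x : ℝ => (x + 2) / 3) = fun x => AffineMap.homothety (1:ℝ) (3⁻¹:ℝ) x := by
  funext x; simp [AffineMap.homothety_apply]; ring

lemma vol_img0 (s : Set ℝ) :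
    volume ((fun x => x / 3) '' s) = ENNReal.ofReal (3⁻¹) * volume s := by
  rw [hom0]
  rw [show (fun x => AffineMap.homothety (0:ℝ) (3⁻¹:ℝ) x) '' s
      = AffineMap.homothety (0:ℝ) (3⁻¹:ℝ) '' s from rfl]
  rw [Measure.addHaar_image_homothety]
  rw [abs_of_nonneg (by norm_num : (0:ℝ) ≤ (3⁻¹:ℝ)^(Module.finrank ℝ ℝ))]
  norm_num

lemma vol_img1 (s : Set ℝ) :
    volume ((fun x => (x + 2) / 3) '' s) = ENNReal.ofReal (3⁻¹) * volume s := by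
  rw [hom1]
  rw [show (fun x => AffineMap.homothety (1:ℝ) (3⁻¹:ℝ) x) '' s
      = AffineMap.homothety (1:ℝ) (3⁻¹:ℝ) '' s from rfl]
  rw [Measure.addHaar_image_homothety]
  rw [abs_of_nonneg (by norm_num : (0:ℝ) ≤ (3⁻¹:ℝ)^(Module.finrank ℝ ℝ))]
  norm_num

lemma imgs_disjoint {s t : Set ℝ} (hs : s ⊆ Set.Icc 0 1) (ht : t ⊆ Set.Icc 0 1) :
    Disjoint ((fun x => x / 3) '' s) ((fun x => (x + 2) / 3) '' t) := by
  refine Set.disjoint_left.2 fun y hy hy' => ?_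
  have h1 := img0_subset hs hy
  have h2 := img1_subset ht hy'
  have : (1:ℝ)/3 < 2/3 := by norm_num
  linarith [h1.2, h2.1]

lemma vol_cantor (n : ℕ) : volume (cantorStage n) = ENNReal.ofReal ((2/3 : ℝ) ^ n) := by
  induction n with
  | zero => simp [cantorStage]
  | succ n ih =>
    have hsub := cantor_subset n
    rw [show cantorStage (n+1)
        = (fun x => x / 3) '' cantorStage n ∪ (fun x => (x + 2) / 3) '' cantorStage n from rfl]
    rw [measure_union (imgs_disjoint hsub hsub) (img1_meas (cantor_meas n))]
    rw [vol_img0, vol_img1, ih, ← ENNReal.ofReal_mul (by norm_num), ← ENNReal.ofReal_add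
      (by positivity) (by positivity)]
    congr 1
    rw [pow_succ]
    ring

lemma Bset_subset (n : ℕ) : Bset n ⊆ Set.Icc 0 1 :=
  fun x hx => cantor_subset _ hx.1

lemma Bset_meas (n : ℕ) : MeasurableSet (Bset n) :=
  (cantor_meas _).diff (cantor_meas _)

lemma vol_Bset (n : ℕ) (hn : 1 ≤ n) :
    volume (Bset n) = ENNReal.ofReal ((1/2 : ℝ) * (2/3 : ℝ) ^ n) := by
  obtain ⟨k, rfl⟩ := Nat.exists_eq_add_of_le' hn
  rw [Bset, show k + 1 - 1 = k from by omega]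
  rw [measure_diff (cantor_anti k) (cantor_meas _).nullMeasurableSet
    (by rw [vol_cantor]; exact ENNReal.ofReal_ne_top)]
  rw [vol_cantor, vol_cantor, ← ENNReal.ofReal_sub _ (by positivity)]
  congr 1
  rw [pow_succ]
  ring

noncomputable def avgF (f : ℝ → ℝ) (n : ℕ) : ℝ :=
  (∫ x in Bset n, f x) / ((1/2 : ℝ) * (2/3 : ℝ) ^ n)

lemma inj0 : Function.Injective (fun x : ℝ => x / 3) := by
  intro a b h; simp only at h; linarith

lemma inj1 : Function.Injective (fun x : ℝ => (x + 2) / 3) := by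
  intro a b h; simp only at h; linarith

lemma split_diff {A B : Set ℝ} (hBA : B ⊆ A) (hA : A ⊆ Set.Icc 0 1) :
    ((fun x : ℝ => x / 3) '' A ∪ (fun x => (x + 2) / 3) '' A)
      \ ((fun x : ℝ => x / 3) '' B ∪ (fun x => (x + 2) / 3) '' B)
    = (fun x : ℝ => x / 3) '' (A \ B) ∪ (fun x => (x + 2) / 3) '' (A \ B) := by
  have hB : B ⊆ Set.Icc 0 1 := hBA.trans hA
  ext y
  constructor
  · rintro ⟨⟨x, hx, rfl⟩ | ⟨x, hx, rfl⟩, hn⟩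
    · exact Or.inl ⟨x, ⟨hx, fun hxB => hn (Or.inl ⟨x, hxB, rfl⟩)⟩, rfl⟩
    · exact Or.inr ⟨x, ⟨hx, fun hxB => hn (Or.inr ⟨x, hxB, rfl⟩)⟩, rfl⟩
  · rintro (⟨x, ⟨hxA, hxB⟩, rfl⟩ | ⟨x, ⟨hxA, hxB⟩, rfl⟩)
    · refine ⟨Or.inl ⟨x, hxA, rfl⟩, ?_⟩
      rintro (⟨x', hx', hxx⟩ | h1)
      · exact hxB (by rwa [inj0 hxx] at hx')
      · exact Set.disjoint_left.1 (imgs_disjoint hA hB) ⟨x, hxA, rfl⟩ h1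
    · refine ⟨Or.inr ⟨x, hxA, rfl⟩, ?_⟩
      rintro (h0 | ⟨x', hx', hxx⟩)
      · exact Set.disjoint_left.1 (imgs_disjoint hB hA) h0 ⟨x, hxA, rfl⟩
      · exact hxB (by rwa [inj1 hxx] at hx')

lemma Bset_rec (k : ℕ) (hk : 1 ≤ k) :
    Bset (k+1) = (fun x => x / 3) '' Bset k ∪ (fun x => (x + 2) / 3) '' Bset k := by
  obtain ⟨j, rfl⟩ := Nat.exists_eq_add_of_le' hk
  show cantorStage (j+1) \ cantorStage (j+2) = _
  rw [show cantorStage (j+1) = (fun x : ℝ => x / 3) '' cantorStage j ∪ (fun x => (x + 2) / 3) '' cantorStage j from rfl,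
      show cantorStage (j+2) = (fun x : ℝ => x / 3) '' cantorStage (j+1) ∪ (fun x => (x + 2) / 3) '' cantorStage (j+1) from rfl,
      split_diff (cantor_anti j) (cantor_subset j)]
  rfl

lemma vol_Bset_lt_top (n : ℕ) : volume (Bset n) < ⊤ :=
  lt_of_le_of_lt (measure_mono (Bset_subset n)) (by rw [Real.volume_Icc]; norm_num)

lemma integrableOn_Bsub {f : ℝ → ℝ} (HC : ContinuousOn f (Set.Icc 0 1))
    {s : Set ℝ} (hs : s ⊆ Set.Icc 0 1) : IntegrableOn f s := by
  exact (HC.integrableOn_Icc).mono_set hs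

lemma cov0 {f : ℝ → ℝ} (k : ℕ) :
    ∫ x in (fun x : ℝ => x / 3) '' Bset k, f x = (3:ℝ)⁻¹ * ∫ x in Bset k, f (x / 3) := by
  have hd : ∀ x ∈ Bset k, HasDerivWithinAt (fun y : ℝ => y / 3) ((1:ℝ)/3) (Bset k) x :=
    fun x _ => ((hasDerivAt_id x).div_const 3).hasDerivWithinAt
  rw [integral_image_eq_integral_abs_deriv_smul (Bset_meas k) hd (inj0.injOn) f]
  simp only [smul_eq_mul, abs_of_nonneg (by norm_num : (0:ℝ) ≤ 1/3)]
  rw [← integral_const_mul]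
  norm_num

lemma cov1 {f : ℝ → ℝ} (k : ℕ) :
    ∫ x in (fun x : ℝ => (x + 2) / 3) '' Bset k, f x = (3:ℝ)⁻¹ * ∫ x in Bset k, f ((x + 2) / 3) := by
  have hd : ∀ x ∈ Bset k, HasDerivWithinAt (fun y : ℝ => (y + 2) / 3) ((1:ℝ)/3) (Bset k) x :=
    fun x _ => (((hasDerivAt_id x).add_const 2).div_const 3).hasDerivWithinAt
  rw [integral_image_eq_integral_abs_deriv_smul (Bset_meas k) hd (inj1.injOn) f]
  simp only [smul_eq_mul, abs_of_nonneg (by norm_num : (0:ℝ) ≤ 1/3)]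
  rw [← integral_const_mul]
  norm_num

lemma integ_rec {f : ℝ → ℝ} (HC : ContinuousOn f (Set.Icc 0 1)) (k : ℕ) (hk : 1 ≤ k) :
    ∫ x in Bset (k+1), f x
      = (3:ℝ)⁻¹ * (∫ x in Bset k, f (x / 3)) + (3:ℝ)⁻¹ * ∫ x in Bset k, f ((x + 2) / 3) := by
  rw [Bset_rec k hk]
  rw [setIntegral_union (imgs_disjoint (Bset_subset k) (Bset_subset k))
      (img1_meas (Bset_meas k))
      (integrableOn_Bsub HC ((img0_subset (Bset_subset k)).trans (Set.Icc_subset_Icc le_rfl (by norm_num))))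
      (integrableOn_Bsub HC ((img1_subset (Bset_subset k)).trans (Set.Icc_subset_Icc (by norm_num) le_rfl)))]
  rw [cov0, cov1]

lemma avg_rec {f : ℝ → ℝ} (HC : ContinuousOn f (Set.Icc 0 1)) (k : ℕ) (hk : 1 ≤ k) :
    avgF f (k+1) = (1/2 : ℝ) * (avgF (fun x => f (x / 3)) k + avgF (fun x => f ((x + 2) / 3)) k) := by
  have hpow : ((2:ℝ)/3) ^ k ≠ 0 := by positivity
  rw [avgF, integ_rec HC k hk, avgF, avgF, pow_succ]
  field_simp

lemma avg_osc {f : ℝ → ℝ} {K : ℝ} (hK : 0 ≤ K)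
    (HL : ∀ x ∈ Set.Icc (0:ℝ) 1, ∀ y ∈ Set.Icc (0:ℝ) 1, |f x - f y| ≤ K * |x - y|)
    (HC : ContinuousOn f (Set.Icc 0 1)) (n : ℕ) (hn : 1 ≤ n) :
    |avgF f n - f 0| ≤ K := by
  set ℓ : ℝ := (1/2 : ℝ) * (2/3 : ℝ) ^ n with hℓdef
  have hℓ : 0 < ℓ := by positivity
  have hvol : (volume (Bset n)).toReal = ℓ := by
    rw [vol_Bset n hn, ENNReal.toReal_ofReal (by positivity)]
  have hInt : IntegrableOn f (Bset n) := integrableOn_Bsub HC (Bset_subset n)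
  have hconst : IntegrableOn (fun _ : ℝ => f 0) (Bset n) :=
    integrableOn_const (vol_Bset_lt_top n).ne
  have key : ∫ x in Bset n, (f x - f 0) = (∫ x in Bset n, f x) - f 0 * ℓ := by
    rw [integral_sub hInt hconst, setIntegral_const, smul_eq_mul, measureReal_def, hvol, mul_comm]
  have bnd : |∫ x in Bset n, (f x - f 0)| ≤ K * ℓ := by
    have h := norm_setIntegral_le_of_norm_le_const_ae' (μ := volume)
      (f := fun x => f x - f 0) (C := K) (vol_Bset_lt_top n)
      (Filter.Eventually.of_forall fun x hx => ?_)
    · rwa [measureReal_def, hvol] at h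
    · have hx1 : x ∈ Set.Icc (0:ℝ) 1 := Bset_subset n hx
      have h0 : (0:ℝ) ∈ Set.Icc (0:ℝ) 1 := by norm_num
      have := HL x hx1 0 h0
      rw [Real.norm_eq_abs]
      calc |f x - f 0| ≤ K * |x - 0| := this
        _ ≤ K * 1 := by
            apply mul_le_mul_of_nonneg_left _ hK
            rw [sub_zero, abs_of_nonneg hx1.1]; exact hx1.2
        _ = K := mul_one K
  have : avgF f n - f 0 = (∫ x in Bset n, (f x - f 0)) / ℓ := by
    rw [key, avgF, sub_div, mul_div_assoc, div_self hℓ.ne', mul_one]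
  rw [this, abs_div, abs_of_pos hℓ, div_le_iff₀ hℓ]
  calc |∫ x in Bset n, (f x - f 0)| ≤ K * ℓ := bnd
    _ = K * ℓ := rfl

lemma key_bound (m : ℕ) (hm : 1 ≤ m) :
    ∀ (K : ℝ) (f : ℝ → ℝ) (n : ℕ), 0 ≤ K →
      (∀ x ∈ Set.Icc (0:ℝ) 1, ∀ y ∈ Set.Icc (0:ℝ) 1, |f x - f y| ≤ K * |x - y|) →
      ContinuousOn f (Set.Icc 0 1) → m ≤ n →
      |avgF f n - avgF f m| ≤ 2 * K / 3 ^ (m - 1) := by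
  induction m, hm using Nat.le_induction with
  | base =>
    intro K f n hK HL HC hn
    have h1 := avg_osc hK HL HC n hn
    have h2 := avg_osc hK HL HC 1 le_rfl
    simp only [Nat.sub_self, pow_zero, div_one]
    calc |avgF f n - avgF f 1| = |(avgF f n - f 0) - (avgF f 1 - f 0)| := by ring_nf
      _ ≤ |avgF f n - f 0| + |avgF f 1 - f 0| := abs_sub _ _
      _ ≤ K + K := add_le_add h1 h2
      _ = 2 * K := by ring
  | succ m hm ih =>
    intro K f n hK HL HC hn
    obtain ⟨n', rfl⟩ : ∃ n', n = n' + 1 := ⟨n - 1, by omega⟩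
    have hn' : m ≤ n' := by omega
    have maps0 : ∀ x ∈ Set.Icc (0:ℝ) 1, x / 3 ∈ Set.Icc (0:ℝ) 1 := by
      intro x hx; constructor <;> [linarith [hx.1]; linarith [hx.2]]
    have maps1 : ∀ x ∈ Set.Icc (0:ℝ) 1, (x + 2) / 3 ∈ Set.Icc (0:ℝ) 1 := by
      intro x hx; constructor <;> [linarith [hx.1]; linarith [hx.2]]
    have HL0 : ∀ x ∈ Set.Icc (0:ℝ) 1, ∀ y ∈ Set.Icc (0:ℝ) 1,
        |f (x / 3) - f (y / 3)| ≤ (K / 3) * |x - y| := by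
      intro x hx y hy
      have := HL _ (maps0 x hx) _ (maps0 y hy)
      calc |f (x / 3) - f (y / 3)| ≤ K * |x / 3 - y / 3| := this
        _ = (K / 3) * |x - y| := by
            rw [show x / 3 - y / 3 = (x - y) / 3 by ring, abs_div]
            rw [abs_of_pos (by norm_num : (0:ℝ) < 3)]; ring
    have HL1 : ∀ x ∈ Set.Icc (0:ℝ) 1, ∀ y ∈ Set.Icc (0:ℝ) 1,
        |f ((x + 2) / 3) - f ((y + 2) / 3)| ≤ (K / 3) * |x - y| := by
      intro x hx y hy
      have := HL _ (maps1 x hx) _ (maps1 y hy)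
      calc |f ((x + 2) / 3) - f ((y + 2) / 3)| ≤ K * |(x + 2) / 3 - (y + 2) / 3| := this
        _ = (K / 3) * |x - y| := by
            rw [show (x + 2) / 3 - (y + 2) / 3 = (x - y) / 3 by ring, abs_div]
            rw [abs_of_pos (by norm_num : (0:ℝ) < 3)]; ring
    have HC0 : ContinuousOn (fun x => f (x / 3)) (Set.Icc 0 1) :=
      HC.comp ((continuous_id.div_const 3).continuousOn) maps0
    have HC1 : ContinuousOn (fun x => f ((x + 2) / 3)) (Set.Icc 0 1) :=
      HC.comp (((continuous_id.add continuous_const).div_const 3).continuousOn) maps1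
    have h0 := ih (K / 3) (fun x => f (x / 3)) n' (by positivity) HL0 HC0 hn'
    have h1 := ih (K / 3) (fun x => f ((x + 2) / 3)) n' (by positivity) HL1 HC1 hn'
    rw [avg_rec HC n' (le_trans hm hn'), avg_rec HC m hm]
    have hmm : m + 1 - 1 = m := by omega
    have hpow : (3:ℝ) ^ m = 3 ^ (m - 1) * 3 := by
      rw [← pow_succ]; congr 1; omega
    have hp : (0:ℝ) < 3 ^ (m - 1) := by positivity
    rw [hmm]
    calc |(1/2 : ℝ) * (avgF (fun x => f (x / 3)) n' + avgF (fun x => f ((x + 2) / 3)) n')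
          - (1/2 : ℝ) * (avgF (fun x => f (x / 3)) m + avgF (fun x => f ((x + 2) / 3)) m)|
        = |(1/2 : ℝ) * ((avgF (fun x => f (x / 3)) n' - avgF (fun x => f (x / 3)) m)
            + (avgF (fun x => f ((x + 2) / 3)) n' - avgF (fun x => f ((x + 2) / 3)) m))| := by
          congr 1; ring
      _ ≤ (1/2 : ℝ) * (|avgF (fun x => f (x / 3)) n' - avgF (fun x => f (x / 3)) m|
            + |avgF (fun x => f ((x + 2) / 3)) n' - avgF (fun x => f ((x + 2) / 3)) m|) := by
          rw [abs_mul, abs_of_pos (by norm_num : (0:ℝ) < 1/2)]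
          exact mul_le_mul_of_nonneg_left (abs_add_le _ _) (by norm_num)
      _ ≤ (1/2 : ℝ) * (2 * (K / 3) / 3 ^ (m - 1) + 2 * (K / 3) / 3 ^ (m - 1)) := by
          exact mul_le_mul_of_nonneg_left (add_le_add h0 h1) (by norm_num)
      _ = 2 * K / 3 ^ m := by
          rw [hpow]; ring

end CantorAux

open CantorAux in
theorem stmt12 (f : ℝ → ℝ) (K : NNReal) (hf : LipschitzOnWith K f (Set.Icc 0 1)) :
    let avg : ℕ → ℝ := fun n => (∫ x in Bset n, f x) / ((1/2 : ℝ) * (2/3 : ℝ) ^ n)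
    (∀ m n : ℕ, 2 ≤ m → m < n →
      |avg n - avg m| ≤ 2 * (K : ℝ) / (3 : ℝ) ^ (m - 1)) ∧
    CauchySeq avg := by
  intro avg
  have HL : ∀ x ∈ Set.Icc (0:ℝ) 1, ∀ y ∈ Set.Icc (0:ℝ) 1, |f x - f y| ≤ (K:ℝ) * |x - y| := by
    intro x hx y hy
    have := (lipschitzOnWith_iff_dist_le_mul.1 hf) x hx y hy
    rwa [Real.dist_eq, Real.dist_eq] at this
  have HC : ContinuousOn f (Set.Icc 0 1) := hf.continuousOn
  have havg : ∀ n, avg n = avgF f n := fun n => rfl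
  constructor
  · intro m n h2 hmn
    rw [havg, havg]
    exact key_bound m (by omega) (K:ℝ) f n K.coe_nonneg HL HC hmn.le
  · rw [Metric.cauchySeq_iff]
    intro ε hε
    have hKpos : (0:ℝ) < 2 * (K:ℝ) + 1 := by positivity
    obtain ⟨j, hj⟩ := exists_pow_lt_of_lt_one
      (show 0 < ε / (2 * (K:ℝ) + 1) by positivity) (by norm_num : (1/3:ℝ) < 1)
    have hbound : ∀ p q : ℕ, j + 2 ≤ p → p < q → dist (avg q) (avg p) < ε := by
      intro p q hp hpq
      rw [Real.dist_eq, havg, havg]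
      have h := key_bound p (by omega) (K:ℝ) f q K.coe_nonneg HL HC hpq.le
      have h3 : (3:ℝ) ^ j ≤ 3 ^ (p - 1) := by
        apply pow_le_pow_right₀ (by norm_num) (by omega)
      calc |avgF f q - avgF f p| ≤ 2 * (K:ℝ) / 3 ^ (p - 1) := h
        _ ≤ (2 * (K:ℝ) + 1) / 3 ^ j := by
            apply div_le_div₀ hKpos.le (by linarith) (by positivity) h3
        _ = (2 * (K:ℝ) + 1) * (1/3) ^ j := by
            rw [one_div, inv_pow]; ring
        _ < ε := by
            have h4 : (1/3:ℝ) ^ j * (2 * (K:ℝ) + 1) < ε := (lt_div_iff₀ hKpos).1 hj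
            linarith
    refine ⟨j + 2, fun a ha b hb => ?_⟩
    rcases lt_trichotomy a b with h | rfl | h
    · rw [dist_comm]; exact hbound a b ha h
    · simpa using hε
    · exact hbound b a hb h
end
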